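/- Let G be a topological group acting continuously on a topological space X. If the action satisfies property (b): for every x ∈ X and every open neighborhood O of the identity in G, x ∈ interior(closure(O·x)), then for every x ∈ X, closure(G·x) is a clopen subset of X. -/

import Mathlib

open Pointwise

theorem stmt5 {G X : Type*} [Group G] [TopologicalSpace G] [IsTopologicalGroup G]
    [TopologicalSpace X] [MulAction G X] [ContinuousSMul G X]
    (hb : ∀ (x : X) (O : Set G), IsOpen O → (1 : G) ∈ O →
      x ∈ interior (closure ((fun g => g • x) '' O)))
    (x : X) :
    IsClopen (closure (MulAction.orbit G x)) := by
  refine ⟨isClosed_closure, ?_⟩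
  rw [isOpen_iff_mem_nhds]
  intro y hy
  have h1 : MulAction.orbit G y ⊆ closure (MulAction.orbit G x) := by
    rintro _ ⟨g, rfl⟩
    have : g • y ∈ g • closure (MulAction.orbit G x) := Set.smul_mem_smul_set hy
    rwa [← closure_smul g (MulAction.orbit G x), MulAction.smul_orbit (G := G) g x] at this
  have h2 := hb y Set.univ isOpen_univ (Set.mem_univ 1)
  have himg : (fun g : G => g • y) '' Set.univ = MulAction.orbit G y := by
    rw [Set.image_univ]; rfl
  rw [himg] at h2
  have : y ∈ interior (closure (MulAction.orbit G x)) :=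
    interior_mono (closure_minimal h1 isClosed_closure) h2
  exact mem_interior_iff_mem_nhds.mp this
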